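/- Let A := ℤ[L, L^{−1}] be the ring of Laurent polynomials over ℤ in one variable L, and let R := A⟦T⟧ be the ring of formal power series over A. For a finite set 𝒫 ⊆ ℚ with −1 ∈ 𝒫, let D_𝒫 ⊆ R be the subring generated by A (as constants), the element T, and the inverses (1 − L^a T^b)^{−1} for all pairs (a, b) ∈ ℤ × ℤ_{>0} with a/b ∈ 𝒫 (these elements are invertible in R since their constant term is 1 ∈ A). Let 𝒫₁, 𝒫₂ ⊆ ℚ be finite sets, each containing −1. If z ∈ R lies in both D_{𝒫₁} and D_{𝒫₂}, then z ∈ D_{𝒫₁ ∩ 𝒫₂}. -/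

import Mathlib

noncomputable section

/-- The subring `D_𝒫` of `ℤ[L,L⁻¹]⟦T⟧` generated by the Laurent-polynomial
constants, the variable `T`, and the inverses `(1 − L^a T^b)⁻¹` for
`(a, b) ∈ ℤ × ℤ_{>0}` with `a/b ∈ 𝒫`. -/
def candidatePoleRing (P : Set ℚ) : Subring (PowerSeries (LaurentPolynomial ℤ)) :=
  Subring.closure
    (Set.range ((PowerSeries.C : LaurentPolynomial ℤ →+* PowerSeries (LaurentPolynomial ℤ))) ∪ {PowerSeries.X} ∪
      {z | ∃ (a : ℤ) (b : ℕ), 0 < b ∧ ((a : ℚ) / (b : ℚ)) ∈ P ∧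
        z = PowerSeries.invOfUnit
          (1 - (PowerSeries.C : LaurentPolynomial ℤ →+* PowerSeries (LaurentPolynomial ℤ)) (LaurentPolynomial.T a) *
            PowerSeries.X ^ b) 1})

namespace CPR

set_option maxHeartbeats 1000000
set_option synthInstance.maxHeartbeats 400000

abbrev S := LaurentPolynomial ℤ

instance : IsDomain S := NoZeroDivisors.to_isDomain _

abbrev K := FractionRing S

/-- The binomial `1 - L^a T^b` as a polynomial over `S`. -/
def pb (p : ℤ × ℕ) : Polynomial S :=
  1 - Polynomial.C (LaurentPolynomial.T p.1) * Polynomial.X ^ p.2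

/-- The binomial `1 - L^a T^b` as a power series over `S`. -/
def B (p : ℤ × ℕ) : PowerSeries S :=
  1 - PowerSeries.C (R := S) (LaurentPolynomial.T p.1) * PowerSeries.X ^ p.2

lemma coe_pb (p : ℤ × ℕ) : ((pb p : Polynomial S) : PowerSeries S) = B p := by
  simp [pb, B, Polynomial.coe_sub, Polynomial.coe_mul, Polynomial.coe_pow,
    Polynomial.coe_C, Polynomial.coe_X, Polynomial.coe_one]

lemma constantCoeff_B (p : ℤ × ℕ) (hb : 0 < p.2) :
    PowerSeries.constantCoeff (R := S) (B p) = 1 := by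
  simp [B, map_sub, map_mul, map_pow, PowerSeries.constantCoeff_X,
    zero_pow hb.ne']

lemma B_mul_inv (p : ℤ × ℕ) (hb : 0 < p.2) :
    B p * PowerSeries.invOfUnit (B p) 1 = 1 :=
  PowerSeries.mul_invOfUnit _ _ (by simpa using constantCoeff_B p hb)

def slope (p : ℤ × ℕ) : ℚ := (p.1 : ℚ) / (p.2 : ℚ)

/-- Product of binomials as a polynomial. -/
def PB (M : Multiset (ℤ × ℕ)) : Polynomial S := (M.map pb).prod

lemma coe_PB (M : Multiset (ℤ × ℕ)) :
    ((PB M : Polynomial S) : PowerSeries S) = (M.map B).prod := by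
  induction M using Multiset.induction_on with
  | empty => simp [PB]
  | cons p N ih =>
      rw [PB, Multiset.map_cons, Multiset.prod_cons, Polynomial.coe_mul,
        Multiset.map_cons, Multiset.prod_cons, coe_pb, ← PB, ih]

lemma PB_add (M N : Multiset (ℤ × ℕ)) : PB (M + N) = PB M * PB N := by
  simp [PB, Multiset.prod_add]

/-- `Good P z` : `z` times a product of binomials with slopes in `P` is a
polynomial. -/
def Good (P : Set ℚ) (z : PowerSeries S) : Prop :=
  ∃ M : Multiset (ℤ × ℕ), (∀ p ∈ M, 0 < p.2 ∧ slope p ∈ P) ∧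
    ∃ q : Polynomial S, ((PB M : Polynomial S) : PowerSeries S) * z = (q : PowerSeries S)

lemma good_mul {P : Set ℚ} {x y : PowerSeries S} (hx : Good P x) (hy : Good P y) :
    Good P (x * y) := by
  obtain ⟨M₁, hM₁, q₁, hq₁⟩ := hx
  obtain ⟨M₂, hM₂, q₂, hq₂⟩ := hy
  refine ⟨M₁ + M₂, fun p hp => ((Multiset.mem_add).1 hp).elim (hM₁ p) (hM₂ p),
    q₁ * q₂, ?_⟩
  rw [PB_add, Polynomial.coe_mul, Polynomial.coe_mul, ← hq₁, ← hq₂]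
  ring

lemma good_add {P : Set ℚ} {x y : PowerSeries S} (hx : Good P x) (hy : Good P y) :
    Good P (x + y) := by
  obtain ⟨M₁, hM₁, q₁, hq₁⟩ := hx
  obtain ⟨M₂, hM₂, q₂, hq₂⟩ := hy
  refine ⟨M₁ + M₂, fun p hp => ((Multiset.mem_add).1 hp).elim (hM₁ p) (hM₂ p),
    PB M₂ * q₁ + PB M₁ * q₂, ?_⟩
  rw [PB_add, Polynomial.coe_mul, Polynomial.coe_add, Polynomial.coe_mul,
    Polynomial.coe_mul, ← hq₁, ← hq₂]
  ring

lemma good_neg {P : Set ℚ} {x : PowerSeries S} (hx : Good P x) : Good P (-x) := by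
  obtain ⟨M, hM, q, hq⟩ := hx
  exact ⟨M, hM, -q, by rw [Polynomial.coe_neg, ← hq]; ring⟩

lemma good_poly {P : Set ℚ} (q : Polynomial S) : Good P (q : PowerSeries S) :=
  ⟨0, by simp, q, by simp [PB]⟩

lemma good_inv {P : Set ℚ} {a : ℤ} {b : ℕ} (hb : 0 < b) (hP : slope (a, b) ∈ P) :
    Good P (PowerSeries.invOfUnit (B (a, b)) 1) := by
  refine ⟨(a, b) ::ₘ 0, ?_, 1, ?_⟩
  · intro p hp
    rw [Multiset.mem_cons] at hp
    rcases hp with hp | hp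
    · subst hp; exact ⟨hb, hP⟩
    · simp at hp
  · rw [Polynomial.coe_one]
    have := B_mul_inv (a, b) hb
    simpa [coe_PB] using this

/-- Elements of `candidatePoleRing P` are `Good`. -/
lemma good_of_mem {P : Set ℚ} {z : PowerSeries S}
    (hz : z ∈ candidatePoleRing P) : Good P z := by
  refine Subring.closure_induction (p := fun z _ => Good P z) ?_ ?_ ?_
    (fun x y _ _ hx hy => good_add hx hy) (fun x _ hx => good_neg hx)
    (fun x y _ _ hx hy => good_mul hx hy) hz
  · rintro x (hx | hx)
    · rcases hx with (⟨r, rfl⟩ | hx)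
      · simpa using good_poly (P := P) (Polynomial.C r)
      · rw [Set.mem_singleton_iff] at hx; subst hx
        simpa using good_poly (P := P) (Polynomial.X)
    · obtain ⟨a, b, hb, hP, rfl⟩ := hx
      exact good_inv hb hP
  · simpa using good_poly (P := P) 0
  · simpa using good_poly (P := P) 1

/-- `Good` elements lie in `candidatePoleRing P`. -/
lemma mem_of_good {P : Set ℚ} {z : PowerSeries S} (hz : Good P z) :
    z ∈ candidatePoleRing P := by
  obtain ⟨M, hM, q, hq⟩ := hz
  -- polynomials are in the ring
  have hC : ∀ r : S, (PowerSeries.C (R := S) r) ∈ candidatePoleRing P := fun r =>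
    Subring.subset_closure (Set.mem_union_left _ (Set.mem_union_left _ ⟨r, rfl⟩))
  have hX : (PowerSeries.X : PowerSeries S) ∈ candidatePoleRing P :=
    Subring.subset_closure (Set.mem_union_left _ (Set.mem_union_right _ rfl))
  have hpoly : ∀ r : Polynomial S, (r : PowerSeries S) ∈ candidatePoleRing P := by
    intro r
    induction r using Polynomial.induction_on' with
    | add f g hf hg => rw [Polynomial.coe_add]; exact add_mem hf hg
    | monomial n a =>
        rw [Polynomial.coe_monomial]
        have : (PowerSeries.monomial (R := S) n) a = PowerSeries.C (R := S) a * PowerSeries.X ^ n := by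
          rw [PowerSeries.X_pow_eq]
          ext m
          simp [PowerSeries.coeff_monomial, PowerSeries.coeff_C_mul]
        rw [this]
        exact mul_mem (hC a) (pow_mem hX n)
  -- the product of inverses
  have hinv : ∀ p ∈ M, PowerSeries.invOfUnit (B p) 1 ∈ candidatePoleRing P := by
    intro p hp
    exact Subring.subset_closure
      (Set.mem_union_right _ ⟨p.1, p.2, (hM p hp).1, (hM p hp).2, rfl⟩)
  have key : ∀ (N : Multiset (ℤ × ℕ)), (∀ p ∈ N, 0 < p.2) →
      (N.map B).prod * (N.map fun p => PowerSeries.invOfUnit (B p) 1).prod = 1 := by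
    intro N
    induction N using Multiset.induction_on with
    | empty => simp
    | cons p N ih =>
        intro h
        simp only [Multiset.map_cons, Multiset.prod_cons]
        have h1 : B p * PowerSeries.invOfUnit (B p) 1 = 1 :=
          B_mul_inv p (h p (Multiset.mem_cons_self p N))
        have h2 := ih fun p hp => h p (Multiset.mem_cons_of_mem hp)
        calc B p * (N.map B).prod *
              (PowerSeries.invOfUnit (B p) 1 *
                (N.map fun p => PowerSeries.invOfUnit (B p) 1).prod)
            = (B p * PowerSeries.invOfUnit (B p) 1) *
              ((N.map B).prod *
                (N.map fun p => PowerSeries.invOfUnit (B p) 1).prod) := by ring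
          _ = 1 := by rw [h1, h2, one_mul]
  have hz : z = (q : PowerSeries S) *
      (M.map fun p => PowerSeries.invOfUnit (B p) 1).prod := by
    have h1 := key M fun p hp => (hM p hp).1
    calc z = ((M.map B).prod *
          (M.map fun p => PowerSeries.invOfUnit (B p) 1).prod) * z := by
            rw [h1, one_mul]
      _ = ((M.map B).prod * z) *
          (M.map fun p => PowerSeries.invOfUnit (B p) 1).prod := by ring
      _ = (q : PowerSeries S) *
          (M.map fun p => PowerSeries.invOfUnit (B p) 1).prod := by
            rw [← coe_PB, hq]
  rw [hz]
  refine mul_mem (hpoly q) ?_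
  have : ∀ (N : Multiset (ℤ × ℕ)),
      (∀ p ∈ N, PowerSeries.invOfUnit (B p) 1 ∈ candidatePoleRing P) →
      (N.map fun p => PowerSeries.invOfUnit (B p) 1).prod ∈ candidatePoleRing P := by
    intro N
    induction N using Multiset.induction_on with
    | empty => intro _; simp only [Multiset.map_zero, Multiset.prod_zero]; exact one_mem _
    | cons p N ih =>
        intro h
        simp only [Multiset.map_cons, Multiset.prod_cons]
        exact mul_mem (h p (Multiset.mem_cons_self p N))
          (ih fun p hp => h p (Multiset.mem_cons_of_mem hp))
  exact this M hinv

/-- the image of a binomial in `K[X]`. -/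
def pbK (p : ℤ × ℕ) : Polynomial K := (pb p).map (algebraMap S K)

lemma algebraMap_T_ne (m n : ℤ) (h : m ≠ n) :
    algebraMap S K (LaurentPolynomial.T m) ≠ algebraMap S K (LaurentPolynomial.T n) := by
  intro hc
  have := IsFractionRing.injective S K hc
  exact h (AddMonoidAlgebra.single_left_injective (one_ne_zero (α := ℤ)) this)

lemma T_unit_K (a : ℤ) :
    algebraMap S K (LaurentPolynomial.T a) *
      algebraMap S K (LaurentPolynomial.T (-a)) = 1 := by
  rw [← map_mul, ← LaurentPolynomial.T_add]
  simp [LaurentPolynomial.T_zero]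

lemma pbK_coprime {p p' : ℤ × ℕ} (hb : 0 < p.2) (hb' : 0 < p'.2)
    (hne : slope p ≠ slope p') : IsCoprime (pbK p) (pbK p') := by
  obtain ⟨a, b⟩ := p
  obtain ⟨a', b'⟩ := p'
  simp only at hb hb'
  set c : K := algebraMap S K (LaurentPolynomial.T a) with hc
  set c' : K := algebraMap S K (LaurentPolynomial.T a') with hc'
  set u : K := algebraMap S K (LaurentPolynomial.T (-a)) with hu
  set u' : K := algebraMap S K (LaurentPolynomial.T (-a')) with hu'
  have hcu : c * u = 1 := T_unit_K a
  have hcu' : c' * u' = 1 := T_unit_K a'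
  have hpbK : pbK (a, b) = 1 - Polynomial.C c * Polynomial.X ^ b := by
    simp [pbK, pb, Polynomial.map_sub, Polynomial.map_one, Polynomial.map_mul,
      Polynomial.map_pow, Polynomial.map_C, Polynomial.map_X, hc]
  have hpbK' : pbK (a', b') = 1 - Polynomial.C c' * Polynomial.X ^ b' := by
    simp [pbK, pb, Polynomial.map_sub, Polynomial.map_one, Polynomial.map_mul,
      Polynomial.map_pow, Polynomial.map_C, Polynomial.map_X, hc']
  -- `pbK (a,b)` divides `X^(b*b') - C (u^b')`
  have hdvd1 : pbK (a, b) ∣ Polynomial.X ^ (b * b') - Polynomial.C (u ^ b') := by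
    have h0 : (Polynomial.X ^ b - Polynomial.C u : Polynomial K)
        = Polynomial.C (-u) * pbK (a, b) := by
      rw [hpbK]
      have : Polynomial.C (-u) * (1 - Polynomial.C c * Polynomial.X ^ b)
          = Polynomial.C (u * c) * Polynomial.X ^ b - Polynomial.C u := by
        rw [Polynomial.C_neg, Polynomial.C_mul]; ring
      rw [this, mul_comm u c, hcu]
      simp
    have h1 : (Polynomial.X ^ b - Polynomial.C u : Polynomial K) ∣
        Polynomial.X ^ (b * b') - Polynomial.C (u ^ b') := by
      have := sub_dvd_pow_sub_pow (Polynomial.X ^ b : Polynomial K) (Polynomial.C u) b'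
      simpa [← pow_mul, ← map_pow] using this
    exact dvd_trans ⟨Polynomial.C (-u), by rw [h0]; ring⟩ h1
  have hdvd2 : pbK (a', b') ∣ Polynomial.X ^ (b * b') - Polynomial.C (u' ^ b) := by
    have h0 : (Polynomial.X ^ b' - Polynomial.C u' : Polynomial K)
        = Polynomial.C (-u') * pbK (a', b') := by
      rw [hpbK']
      have : Polynomial.C (-u') * (1 - Polynomial.C c' * Polynomial.X ^ b')
          = Polynomial.C (u' * c') * Polynomial.X ^ b' - Polynomial.C u' := by
        rw [Polynomial.C_neg, Polynomial.C_mul]; ring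
      rw [this, mul_comm u' c', hcu']
      simp
    have h1 : (Polynomial.X ^ b' - Polynomial.C u' : Polynomial K) ∣
        Polynomial.X ^ (b * b') - Polynomial.C (u' ^ b) := by
      have := sub_dvd_pow_sub_pow (Polynomial.X ^ b' : Polynomial K) (Polynomial.C u') b
      simpa [← pow_mul, mul_comm b' b, ← map_pow] using this
    exact dvd_trans ⟨Polynomial.C (-u'), by rw [h0]; ring⟩ h1
  -- the constant `u'^b - u^b'` is nonzero
  have hd : u' ^ b - u ^ b' ≠ 0 := by
    have hint : a * b' ≠ a' * b := by
      intro hE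
      apply hne
      unfold slope
      simp only
      rw [div_eq_div_iff (by exact_mod_cast hb.ne' : (b : ℚ) ≠ 0)
        (by exact_mod_cast hb'.ne' : (b' : ℚ) ≠ 0)]
      exact_mod_cast hE
    have : u' ^ b ≠ u ^ b' := by
      rw [hu, hu', ← map_pow, ← map_pow, LaurentPolynomial.T_pow,
        LaurentPolynomial.T_pow]
      refine algebraMap_T_ne _ _ ?_
      intro hE
      apply hint
      nlinarith [hE]
    exact sub_ne_zero.mpr this
  obtain ⟨s, hs⟩ := hdvd1
  obtain ⟨t, ht⟩ := hdvd2
  refine ⟨Polynomial.C (u' ^ b - u ^ b')⁻¹ * s,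
    Polynomial.C (u' ^ b - u ^ b')⁻¹ * (-t), ?_⟩
  have hsub : pbK (a, b) * s - pbK (a', b') * t
      = Polynomial.C (u' ^ b - u ^ b') := by
    rw [← ht, ← hs, Polynomial.C_sub]
    ring
  calc Polynomial.C (u' ^ b - u ^ b')⁻¹ * s * pbK (a, b) +
        Polynomial.C (u' ^ b - u ^ b')⁻¹ * (-t) * pbK (a', b')
      = Polynomial.C (u' ^ b - u ^ b')⁻¹ *
        (pbK (a, b) * s - pbK (a', b') * t) := by ring
    _ = Polynomial.C (u' ^ b - u ^ b')⁻¹ * Polynomial.C (u' ^ b - u ^ b') := by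
        rw [hsub]
    _ = 1 := by rw [← map_mul, inv_mul_cancel₀ hd, map_one]

lemma isCoprime_multiset_prod_right {x : Polynomial K} {M : Multiset (Polynomial K)}
    (h : ∀ y ∈ M, IsCoprime x y) : IsCoprime x M.prod := by
  induction M using Multiset.induction_on with
  | empty => simpa using isCoprime_one_right
  | cons p N ih =>
      rw [Multiset.prod_cons]
      exact (h p (Multiset.mem_cons_self p N)).mul_right
        (ih fun y hy => h y (Multiset.mem_cons_of_mem hy))

lemma isCoprime_multiset_prod_left {x : Polynomial K} {M : Multiset (Polynomial K)}
    (h : ∀ y ∈ M, IsCoprime y x) : IsCoprime M.prod x :=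
  (isCoprime_multiset_prod_right fun y hy => (h y hy).symm).symm

/-- map of power series to `K`. -/
def ψ : PowerSeries S →+* PowerSeries K := PowerSeries.map (algebraMap S K)

lemma ψ_constantCoeff (w : PowerSeries S) :
    PowerSeries.constantCoeff (R := K) (ψ w) =
      algebraMap S K (PowerSeries.constantCoeff (R := S) w) := by
  rw [← PowerSeries.coeff_zero_eq_constantCoeff_apply,
    ← PowerSeries.coeff_zero_eq_constantCoeff_apply]
  simp [ψ, PowerSeries.coeff_map]

lemma ψ_injective : Function.Injective ψ := by
  intro x y h
  apply PowerSeries.ext; intro n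
  exact IsFractionRing.injective S K
    (by simpa [ψ] using congrArg (PowerSeries.coeff n) h)

lemma ψ_coe (p : Polynomial S) :
    ψ (p : PowerSeries S) = ((p.map (algebraMap S K) : Polynomial K) : PowerSeries K) := by
  apply PowerSeries.ext; intro n
  simp [ψ, PowerSeries.coeff_map, Polynomial.coeff_coe, Polynomial.coeff_map]

lemma good_inter {P₁ P₂ : Set ℚ} {z : PowerSeries S}
    (h1 : Good P₁ z) (h2 : Good P₂ z) : Good (P₁ ∩ P₂) z := by
  classical
  obtain ⟨M₁, hM₁, q₁, hq₁⟩ := h1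
  obtain ⟨M₂, hM₂, q₂, hq₂⟩ := h2
  set M : Multiset (ℤ × ℕ) := M₁.filter (fun p => slope p ∈ P₂) with hM
  set M' : Multiset (ℤ × ℕ) := M₁.filter (fun p => ¬ slope p ∈ P₂) with hM'
  have hsplit : M + M' = M₁ := Multiset.filter_add_not _ _
  -- cross identity in S[X]
  have hcross : PB M₂ * q₁ = PB M₁ * q₂ := by
    rw [← Polynomial.coe_inj, Polynomial.coe_mul, Polynomial.coe_mul, ← hq₁, ← hq₂]
    ring
  -- map everything to K[X]
  set φ : Polynomial S →+* Polynomial K := Polynomial.mapRingHom (algebraMap S K) with hφ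
  -- coprimality
  have hcop : IsCoprime (φ (PB M')) (φ (PB M₂)) := by
    have hPB : ∀ N : Multiset (ℤ × ℕ), φ (PB N) = (N.map pbK).prod := by
      intro N
      rw [PB, map_multiset_prod, Multiset.map_map]
      rfl
    rw [hPB, hPB]
    apply isCoprime_multiset_prod_left
    intro y hy
    rw [Multiset.mem_map] at hy
    obtain ⟨p, hp, rfl⟩ := hy
    apply isCoprime_multiset_prod_right
    intro y' hy'
    rw [Multiset.mem_map] at hy'
    obtain ⟨p', hp', rfl⟩ := hy'
    have hpM₁ : p ∈ M₁ := Multiset.mem_of_mem_filter hp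
    have hpnot : ¬ slope p ∈ P₂ := (Multiset.mem_filter.1 hp).2
    have hp'P₂ : slope p' ∈ P₂ := (hM₂ p' hp').2
    exact pbK_coprime (hM₁ p hpM₁).1 (hM₂ p' hp').1 (fun hE => hpnot (hE ▸ hp'P₂))
  -- divisibility
  have hdvd : φ (PB M') ∣ φ q₁ := by
    apply hcop.dvd_of_dvd_mul_left
    have : PB M₂ * q₁ = PB M' * (PB M * q₂) := by
      rw [hcross, ← hsplit, PB_add]; ring
    have hd : PB M' ∣ PB M₂ * q₁ := ⟨PB M * q₂, this⟩
    simpa [map_mul] using map_dvd φ hd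
  obtain ⟨h, hh⟩ := hdvd
  -- cancel in K⟦X⟧
  have hKword : ψ (((PB M : Polynomial S) : PowerSeries S) * z)
      = ((h : Polynomial K) : PowerSeries K) := by
    have hne : (((φ (PB M') : Polynomial K) : PowerSeries K)) ≠ 0 := by
      intro hc
      have : PowerSeries.constantCoeff (R := K) ((φ (PB M') : Polynomial K) : PowerSeries K) = 1 := by
        have : ψ (((PB M' : Polynomial S) : PowerSeries S)) =
            ((φ (PB M') : Polynomial K) : PowerSeries K) := ψ_coe _
        rw [← this]
        have hcc : PowerSeries.constantCoeff (R := S) ((PB M' : Polynomial S) : PowerSeries S) = 1 := by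
          rw [coe_PB, map_multiset_prod, Multiset.map_map]
          have : ∀ x ∈ Multiset.map (PowerSeries.constantCoeff (R := S) ∘ B) M', x = 1 := by
            intro x hx
            rw [Multiset.mem_map] at hx
            obtain ⟨p, hp, rfl⟩ := hx
            exact constantCoeff_B p (hM₁ p (Multiset.mem_of_mem_filter hp)).1
          rw [Multiset.prod_eq_one this]
        rw [ψ_constantCoeff, hcc, map_one]
      rw [hc] at this
      simp at this
    apply mul_left_cancel₀ hne
    have e1 : ψ (((PB M₁ : Polynomial S) : PowerSeries S) * z) =
        ((φ q₁ : Polynomial K) : PowerSeries K) := by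
      rw [hq₁]; exact ψ_coe _
    have e2 : ((φ (PB M₁) : Polynomial K) : PowerSeries K) * ψ z =
        ((φ q₁ : Polynomial K) : PowerSeries K) := by
      rw [← e1, map_mul, ψ_coe]
      rfl
    have e3 : φ (PB M₁) = φ (PB M') * φ (PB M) := by
      rw [← map_mul, ← PB_add]
      congr 1
      rw [add_comm] at hsplit
      rw [hsplit]
    calc ((φ (PB M') : Polynomial K) : PowerSeries K) *
          ψ (((PB M : Polynomial S) : PowerSeries S) * z)
        = ((φ (PB M') : Polynomial K) : PowerSeries K) *
          (((φ (PB M) : Polynomial K) : PowerSeries K) * ψ z) := by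
          rw [map_mul, ψ_coe]; rfl
      _ = ((φ (PB M₁) : Polynomial K) : PowerSeries K) * ψ z := by
          rw [e3, Polynomial.coe_mul]; ring
      _ = ((φ q₁ : Polynomial K) : PowerSeries K) := e2
      _ = ((φ (PB M') : Polynomial K) : PowerSeries K) *
          ((h : Polynomial K) : PowerSeries K) := by
          rw [hh, Polynomial.coe_mul]
  -- hence the power series `PB M * z` is a polynomial
  set w : PowerSeries S := ((PB M : Polynomial S) : PowerSeries S) * z with hw
  have hcoeff : ∀ n, h.natDegree < n → PowerSeries.coeff (R := S) n w = 0 := by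
    intro n hn
    have : algebraMap S K (PowerSeries.coeff (R := S) n w) = 0 := by
      have := congrArg (PowerSeries.coeff (R := K) n) hKword
      rw [Polynomial.coeff_coe] at this
      rw [Polynomial.coeff_eq_zero_of_natDegree_lt hn] at this
      simpa [ψ, PowerSeries.coeff_map] using this
    exact IsFractionRing.injective S K (by simpa using this)
  refine ⟨M, ?_, PowerSeries.trunc (h.natDegree + 1) w, ?_⟩
  · intro p hp
    have hpM₁ : p ∈ M₁ := Multiset.mem_of_mem_filter hp
    exact ⟨(hM₁ p hpM₁).1, (hM₁ p hpM₁).2, (Multiset.mem_filter.1 hp).2⟩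
  · rw [← hw]
    apply PowerSeries.ext; intro n
    rw [Polynomial.coeff_coe, PowerSeries.coeff_trunc]
    by_cases hn : n < h.natDegree + 1
    · rw [if_pos hn]
    · rw [if_neg hn]
      exact hcoeff n (by omega)

end CPR

/-- The intersection of two sets of candidate poles is a set of candidate
poles: membership in both `D_{𝒫₁}` and `D_{𝒫₂}` implies membership in
`D_{𝒫₁ ∩ 𝒫₂}`. -/
theorem mem_candidatePoleRing_inter
    (P₁ P₂ : Set ℚ) (h₁ : P₁.Finite) (h₂ : P₂.Finite)
    (hm₁ : (-1 : ℚ) ∈ P₁) (hm₂ : (-1 : ℚ) ∈ P₂)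
    (z : PowerSeries (LaurentPolynomial ℤ))
    (hz₁ : z ∈ candidatePoleRing P₁) (hz₂ : z ∈ candidatePoleRing P₂) :
    z ∈ candidatePoleRing (P₁ ∩ P₂) := by
  exact CPR.mem_of_good (CPR.good_inter (CPR.good_of_mem hz₁) (CPR.good_of_mem hz₂))

end
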